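/- Let $Q_1, Q_2$ be symmetric real $n\times n$ matrices with $Q_1$ negative semidefinite. Suppose there exists $c_0 > 0$ such that $cQ_1 + Q_2$ is negative semidefinite for all $c \ge c_0$, and suppose the set $S = \{s \in \mathbb{R} : \det(sQ_1+Q_2) = 0\}$ is finite and nonempty. Then for $c^\star = \max S$, the matrix $cQ_1 + Q_2$ is negative semidefinite for all $c \ge c^\star$. -/

import Mathlib

open Matrix

private lemma exists_delta_aux {n : ℕ} (hn : 0 < n) (A : Matrix (Fin n) (Fin n) ℝ)
    (hA : A.PosSemidef) (hdet : A.det ≠ 0) :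
    ∃ δ : ℝ, 0 < δ ∧ ∀ x : Fin n → ℝ, δ * (x ⬝ᵥ x) ≤ x ⬝ᵥ A *ᵥ x := by
  haveI : Nonempty (Fin n) := ⟨⟨0, hn⟩⟩
  have hH := hA.1
  set ev := hH.eigenvalues with hev
  have hpos : ∀ i, 0 < ev i := by
    intro i
    refine lt_of_le_of_ne (hA.eigenvalues_nonneg i) (Ne.symm ?_)
    intro h0
    apply hdet
    rw [hH.det_eq_prod_eigenvalues]
    refine Finset.prod_eq_zero (Finset.mem_univ i) ?_
    simp [← hev, h0]
  set δ := Finset.univ.inf' Finset.univ_nonempty ev with hδ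
  have hδpos : 0 < δ := by
    rw [hδ, Finset.lt_inf'_iff]
    exact fun i _ => hpos i
  refine ⟨δ, hδpos, fun x => ?_⟩
  set U := (hH.eigenvectorUnitary : Matrix (Fin n) (Fin n) ℝ) with hU
  have hUU : U * star U = 1 := (Matrix.mem_unitaryGroup_iff).mp hH.eigenvectorUnitary.2
  have key : A - δ • (1 : Matrix (Fin n) (Fin n) ℝ)
      = U * diagonal (fun i => ev i - δ) * star U := by
    have h1 : δ • (1 : Matrix (Fin n) (Fin n) ℝ) = U * (δ • 1) * star U := by
      rw [Matrix.mul_smul, Matrix.smul_mul, mul_one, hUU]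
    have h2 : A = U * diagonal (RCLike.ofReal ∘ ev) * star U := hH.spectral_theorem
    rw [h2, h1, ← Matrix.sub_mul, ← Matrix.mul_sub, smul_one_eq_diagonal, ← diagonal_sub]
    norm_num [Function.comp]
  have hps : (A - δ • (1 : Matrix (Fin n) (Fin n) ℝ)).PosSemidef := by
    rw [key]
    have hd : (diagonal (fun i => ev i - δ)).PosSemidef := by
      refine PosSemidef.diagonal fun i => ?_
      simp only [Pi.zero_apply, sub_nonneg, hδ]
      exact Finset.inf'_le _ (Finset.mem_univ i)
    simpa [Matrix.star_eq_conjTranspose] using hd.mul_mul_conjTranspose_same U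
  have := hps.dotProduct_mulVec_nonneg x
  rw [star_trivial, sub_mulVec, dotProduct_sub, smul_mulVec, one_mulVec,
    dotProduct_smul, smul_eq_mul, sub_nonneg] at this
  exact this

private lemma quad_le_aux {n : ℕ} (B : Matrix (Fin n) (Fin n) ℝ) (x : Fin n → ℝ) :
    x ⬝ᵥ B *ᵥ x ≤ (∑ i, ∑ j, |B i j|) * (x ⬝ᵥ x) := by
  have hxx : ∀ i j, |x i| * |x j| ≤ x ⬝ᵥ x := by
    intro i j
    have h1 : x i * x i ≤ x ⬝ᵥ x :=
      Finset.single_le_sum (f := fun k => x k * x k)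
        (fun k _ => mul_self_nonneg (x k)) (Finset.mem_univ i)
    have h2 : x j * x j ≤ x ⬝ᵥ x :=
      Finset.single_le_sum (f := fun k => x k * x k)
        (fun k _ => mul_self_nonneg (x k)) (Finset.mem_univ j)
    nlinarith [sq_nonneg (|x i| - |x j|), abs_nonneg (x i), abs_nonneg (x j),
      sq_abs (x i), sq_abs (x j)]
  have expand : x ⬝ᵥ B *ᵥ x = ∑ i, ∑ j, x i * (B i j * x j) := by
    simp [dotProduct, mulVec, Finset.mul_sum]
  rw [expand, Finset.sum_mul]
  refine Finset.sum_le_sum fun i _ => ?_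
  rw [Finset.sum_mul]
  refine Finset.sum_le_sum fun j _ => ?_
  calc x i * (B i j * x j) ≤ |x i * (B i j * x j)| := le_abs_self _
    _ = |B i j| * (|x i| * |x j|) := by rw [abs_mul, abs_mul]; ring
    _ ≤ |B i j| * (x ⬝ᵥ x) := by
        exact mul_le_mul_of_nonneg_left (hxx i j) (abs_nonneg _)

/-- If `Q₁ ⪯ 0`, `Q₂` symmetric, `c Q₁ + Q₂ ⪯ 0` for all sufficiently large `c`,
and the set `S` of finite generalized eigenvalues of the pencil is finite and
nonempty, then `c Q₁ + Q₂ ⪯ 0` for all `c ≥ max S`. -/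
theorem smul_add_negSemidef_of_ge_max_gen_eigenvalue {n : ℕ}
    (Q₁ Q₂ : Matrix (Fin n) (Fin n) ℝ)
    (hQ₁s : Q₁.IsSymm) (hQ₂s : Q₂.IsSymm)
    (hQ₁ : (-Q₁).PosSemidef)
    (hlarge : ∃ c₀ : ℝ, 0 < c₀ ∧ ∀ c : ℝ, c₀ ≤ c → (-(c • Q₁ + Q₂)).PosSemidef)
    (S : Set ℝ) (hS : S = {s : ℝ | (s • Q₁ + Q₂).det = 0})
    (hfin : S.Finite) (hne : S.Nonempty)
    (cstar : ℝ) (hcmem : cstar ∈ S) (hcmax : ∀ s ∈ S, s ≤ cstar) :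
    ∀ c : ℝ, cstar ≤ c → (-(c • Q₁ + Q₂)).PosSemidef := by
  -- Hermitian-ness of all matrices in the pencil
  have herm : ∀ c : ℝ, (-(c • Q₁ + Q₂)).IsHermitian := by
    intro c
    rw [IsHermitian, conjTranspose_eq_transpose_of_trivial]
    exact ((hQ₁s.smul c).add hQ₂s).neg
  -- trivial case n = 0
  rcases Nat.eq_zero_or_pos n with hn | hn
  · intro c _
    refine .of_dotProduct_mulVec_nonneg (herm c) fun x => ?_
    subst hn
    simp [dotProduct]
  -- linear decomposition
  have decomp : ∀ c r : ℝ, -(c • Q₁ + Q₂) = -(r • Q₁ + Q₂) + (c - r) • (-Q₁) := by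
    intro c r
    ext i j
    simp [Matrix.add_apply, Matrix.neg_apply, Matrix.smul_apply]
    ring
  -- nonneg smul of PosSemidef
  have smulPS : ∀ (a : ℝ), 0 ≤ a → (a • (-Q₁)).PosSemidef := by
    intro a ha
    refine .of_dotProduct_mulVec_nonneg ?_ fun x => ?_
    · rw [IsHermitian, conjTranspose_smul, star_trivial, hQ₁.1]
    · rw [smul_mulVec, dotProduct_smul, smul_eq_mul]
      exact mul_nonneg ha (hQ₁.dotProduct_mulVec_nonneg x)
  -- upward monotonicity
  have mono : ∀ c r : ℝ, r ≤ c → (-(r • Q₁ + Q₂)).PosSemidef → (-(c • Q₁ + Q₂)).PosSemidef := by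
    intro c r hrc h
    rw [decomp c r]
    exact h.add (smulPS _ (sub_nonneg.mpr hrc))
  -- right-limit closedness
  have rlim : ∀ r : ℝ, (∀ s : ℝ, r < s → (-(s • Q₁ + Q₂)).PosSemidef) →
      (-(r • Q₁ + Q₂)).PosSemidef := by
    intro r h
    refine .of_dotProduct_mulVec_nonneg (herm r) fun x => ?_
    rw [star_trivial]
    set q := x ⬝ᵥ (-(r • Q₁ + Q₂)) *ᵥ x with hq
    set K := x ⬝ᵥ (-Q₁) *ᵥ x with hK
    have hKnn : 0 ≤ K := hQ₁.dotProduct_mulVec_nonneg x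
    have key : ∀ ε : ℝ, 0 < ε → 0 ≤ q + ε * K := by
      intro ε hε
      have h1 := (h (r + ε) (by linarith)).dotProduct_mulVec_nonneg x
      rw [star_trivial, decomp (r + ε) r, add_mulVec, dotProduct_add,
        smul_mulVec, dotProduct_smul, smul_eq_mul] at h1
      have h2 : r + ε - r = ε := by ring
      rw [h2] at h1
      exact h1
    rcases eq_or_lt_of_le hKnn with hK0 | hK0
    · have := key 1 one_pos
      simpa [← hK0] using this
    · by_contra hqneg
      push_neg at hqneg
      have hKne : K ≠ 0 := ne_of_gt hK0
      have hkey := key (-q / (2 * K)) (div_pos (by linarith) (by linarith))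
      have heq : (-q / (2 * K)) * K = -q / 2 := by
        field_simp
      rw [heq] at hkey
      linarith
  -- main claim for c > cstar
  have claim : ∀ c : ℝ, cstar < c → (-(c • Q₁ + Q₂)).PosSemidef := by
    by_contra hcon
    push_neg at hcon
    obtain ⟨c, hc, hcP⟩ := hcon
    obtain ⟨c₀, hc₀pos, hc₀⟩ := hlarge
    set c₁ := max c₀ (c + 1) with hc₁
    have hPc₁ : (-(c₁ • Q₁ + Q₂)).PosSemidef := hc₀ c₁ (le_max_left _ _)
    have hcc₁ : c ≤ c₁ := le_trans (by linarith) (le_max_right c₀ (c + 1))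
    set U : Set ℝ := {t | t ∈ Set.Icc c c₁ ∧ ¬ (-(t • Q₁ + Q₂)).PosSemidef} with hUdef
    have hcU : c ∈ U := ⟨⟨le_refl c, hcc₁⟩, hcP⟩
    have hUne : U.Nonempty := ⟨c, hcU⟩
    have hUbdd : BddAbove U := ⟨c₁, fun t ht => ht.1.2⟩
    set r := sSup U with hr
    have hcr : c ≤ r := le_csSup hUbdd hcU
    have hrc₁ : r ≤ c₁ := csSup_le hUne fun t ht => ht.1.2
    have hPr : (-(r • Q₁ + Q₂)).PosSemidef := by
      refine rlim r fun s hs => ?_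
      by_cases hsc₁ : s ≤ c₁
      · by_contra hns
        have hsU : s ∈ U := ⟨⟨le_trans hcr hs.le, hsc₁⟩, hns⟩
        exact absurd (le_csSup hUbdd hsU) (not_le.mpr hs)
      · exact mono s c₁ (le_of_not_ge hsc₁) hPc₁
    -- r is not a generalized eigenvalue since r ≥ c > cstar
    have hrS : r ∉ S := fun h => absurd (hcmax r h) (not_le.mpr (lt_of_lt_of_le hc hcr))
    have hdetr : (r • Q₁ + Q₂).det ≠ 0 := by
      intro h
      exact hrS (by rw [hS]; exact h)
    have hdetr' : (-(r • Q₁ + Q₂)).det ≠ 0 := by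
      rw [Matrix.det_neg]
      simp [hdetr]
    obtain ⟨δ, hδpos, hδ⟩ := exists_delta_aux hn _ hPr hdetr'
    set K := ∑ i, ∑ j, |(-Q₁) i j| with hKdef
    have hKnn : 0 ≤ K := Finset.sum_nonneg fun i _ => Finset.sum_nonneg fun j _ => abs_nonneg _
    set ε := δ / (K + 1) with hε
    have hεpos : 0 < ε := by positivity
    obtain ⟨t, htU, htlt⟩ := exists_lt_of_lt_csSup hUne (show r - ε < r by linarith)
    have htr : t ≤ r := le_csSup hUbdd htU
    refine htU.2 (.of_dotProduct_mulVec_nonneg (herm t) fun x => ?_)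
    rw [star_trivial, decomp t r, add_mulVec, dotProduct_add,
      smul_mulVec, dotProduct_smul, smul_eq_mul]
    have h1 : δ * (x ⬝ᵥ x) ≤ x ⬝ᵥ (-(r • Q₁ + Q₂)) *ᵥ x := hδ x
    have h2 : x ⬝ᵥ (-Q₁) *ᵥ x ≤ K * (x ⬝ᵥ x) := quad_le_aux (-Q₁) x
    have h3 : 0 ≤ x ⬝ᵥ (-Q₁) *ᵥ x := hQ₁.dotProduct_mulVec_nonneg x
    have hxx : 0 ≤ x ⬝ᵥ x :=
      Finset.sum_nonneg fun k _ => mul_self_nonneg (x k)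
    have h4 : (r - t) * (x ⬝ᵥ (-Q₁) *ᵥ x) ≤ ε * (K * (x ⬝ᵥ x)) := by
      apply mul_le_mul (by linarith) h2 h3 (le_of_lt hεpos)
    have h5 : ε * (K * (x ⬝ᵥ x)) ≤ δ * (x ⬝ᵥ x) := by
      rw [hε]
      rw [div_mul_eq_mul_div, mul_comm]
      rw [div_le_iff₀ (by linarith)]
      nlinarith
    nlinarith
  -- conclude
  intro c hc
  rcases eq_or_lt_of_le hc with heq | hlt
  · exact rlim c fun s hs => claim s (lt_of_le_of_lt heq.le hs)
  · exact claim c hlt
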